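/- Let 0 < a < b and 0 < c < d. Then the measure (x²/a² + y²/c² − 1/3) dx dy is a Steffensen-Popoviciu measure on the rectangle [−a, b] × [−c, d]; that is, its total mass is positive and ∫_{−a}^{b} ∫_{−c}^{d} h(x,y) (x²/a² + y²/c² − 1/3) dy dx ≥ 0 for every continuous convex function h : [−a,b] × [−c,d] → [0,∞). -/

import Mathlib

open MeasureTheory intervalIntegral

/-- Monotonicity of the symmetrization of a convex function. -/
lemma spAux_symm_mono {a b : ℝ} (ha : 0 < a) (hab : a ≤ b) {g : ℝ → ℝ}
    (hconv : ConvexOn ℝ (Set.Icc (-a) b) g) :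
    MonotoneOn (fun x => g x + g (-x)) (Set.Icc 0 a) := by
  intro s hs t ht hst
  rcases eq_or_lt_of_le (le_trans hs.1 hst) with h0 | h0
  · have hs0 : s = 0 := le_antisymm (h0 ▸ hst) hs.1
    simp [hs0, ← h0]
  have htmem : t ∈ Set.Icc (-a) b := ⟨by linarith [hs.1, ht.2], le_trans ht.2 hab⟩
  have hntmem : -t ∈ Set.Icc (-a) b := ⟨by linarith [ht.2], by linarith [hs.1, hst, ha, hab]⟩
  set l : ℝ := (t + s) / (2 * t) with hl
  have hl0 : 0 ≤ l := div_nonneg (by linarith [hs.1]) (by linarith)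
  have hl1 : 0 ≤ 1 - l := by
    rw [hl]; rw [sub_nonneg, div_le_one (by linarith)]; linarith [hst]
  have hsum : l + (1 - l) = 1 := by ring
  have h1 : g s ≤ l * g t + (1 - l) * g (-t) := by
    have := hconv.2 htmem hntmem hl0 hl1 hsum
    have he : l • t + (1 - l) • (-t) = s := by
      simp only [smul_eq_mul, hl]; field_simp; ring
    rw [he] at this; simpa using this
  have h2 : g (-s) ≤ (1 - l) * g t + l * g (-t) := by
    have := hconv.2 htmem hntmem hl1 hl0 (by ring)
    have he : (1 - l) • t + l • (-t) = -s := by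
      simp only [smul_eq_mul, hl]; field_simp; ring
    rw [he] at this; simpa using this
  simp only
  nlinarith [h1, h2]

/-- The 1-D Steffensen–Popoviciu inequality for the weight `x²/a² - 1/6` on `[-a, b]`. -/
lemma spAux_oneDim (a b : ℝ) (ha : 0 < a) (hab : a ≤ b) (g : ℝ → ℝ)
    (hint : IntervalIntegrable g volume (-a) b)
    (hconv : ConvexOn ℝ (Set.Icc (-a) b) g)
    (hpos : ∀ x ∈ Set.Icc (-a) b, 0 ≤ g x) :
    0 ≤ ∫ x in (-a)..b, g x * (x ^ 2 / a ^ 2 - 1 / 6) := by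
  have hpc : Continuous fun x : ℝ => x ^ 2 / a ^ 2 - 1 / 6 := by continuity
  have hgp : IntervalIntegrable (fun x => g x * (x ^ 2 / a ^ 2 - 1 / 6)) volume (-a) b :=
    hint.mul_continuousOn hpc.continuousOn
  have hsub1 : Set.uIcc (-a) a ⊆ Set.uIcc (-a) b := by
    rw [Set.uIcc_of_le (by linarith), Set.uIcc_of_le (by linarith)]
    exact Set.Icc_subset_Icc le_rfl hab
  have hsub2 : Set.uIcc a b ⊆ Set.uIcc (-a) b := by
    rw [Set.uIcc_of_le hab, Set.uIcc_of_le (by linarith)]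
    exact Set.Icc_subset_Icc (by linarith) le_rfl
  have hgp1 := hgp.mono_set hsub1
  have hgp2 := hgp.mono_set hsub2
  have hsplit : (∫ x in (-a)..b, g x * (x ^ 2 / a ^ 2 - 1 / 6))
      = (∫ x in (-a)..a, g x * (x ^ 2 / a ^ 2 - 1 / 6))
        + ∫ x in a..b, g x * (x ^ 2 / a ^ 2 - 1 / 6) :=
    (integral_add_adjacent_intervals hgp1 hgp2).symm
  have hright : 0 ≤ ∫ x in a..b, g x * (x ^ 2 / a ^ 2 - 1 / 6) := by
    apply intervalIntegral.integral_nonneg hab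
    intro x hx
    have hx1 : a ≤ x := hx.1
    have hgx : 0 ≤ g x := hpos x ⟨by linarith, hx.2⟩
    have hp : 0 ≤ x ^ 2 / a ^ 2 - 1 / 6 := by
      have : a ^ 2 ≤ x ^ 2 := by nlinarith
      have : (1 : ℝ) ≤ x ^ 2 / a ^ 2 := (one_le_div (by positivity)).2 this
      linarith
    positivity
  have hleft : 0 ≤ ∫ x in (-a)..a, g x * (x ^ 2 / a ^ 2 - 1 / 6) := by
    have hsubl : Set.uIcc (-a) 0 ⊆ Set.uIcc (-a) b := by
      rw [Set.uIcc_of_le (by linarith), Set.uIcc_of_le (by linarith)]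
      exact Set.Icc_subset_Icc le_rfl (by linarith)
    have hsubr : Set.uIcc (0:ℝ) a ⊆ Set.uIcc (-a) b := by
      rw [Set.uIcc_of_le (by linarith), Set.uIcc_of_le (by linarith)]
      exact Set.Icc_subset_Icc (by linarith) hab
    have hgpl := hgp.mono_set hsubl
    have hgpr := hgp.mono_set hsubr
    have hgn : IntervalIntegrable (fun x => g (-x) * (x ^ 2 / a ^ 2 - 1 / 6)) volume 0 a := by
      have h1 := ((IntervalIntegrable.iff_comp_neg).mp hgpl).symm
      simp only [neg_neg, neg_zero] at h1
      have h2 : (fun x => g (-x) * ((-x) ^ 2 / a ^ 2 - 1 / 6))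
          = fun x => g (-x) * (x ^ 2 / a ^ 2 - 1 / 6) := by
        funext x; rw [neg_sq]
      rwa [h2] at h1
    have hflip : (∫ x in (-a)..(0:ℝ), g x * (x ^ 2 / a ^ 2 - 1 / 6))
        = ∫ x in (0:ℝ)..a, g (-x) * (x ^ 2 / a ^ 2 - 1 / 6) := by
      have h1 : (∫ x in (0:ℝ)..a, g (-x) * (x ^ 2 / a ^ 2 - 1 / 6))
          = ∫ x in (0:ℝ)..a, g (-x) * ((-x) ^ 2 / a ^ 2 - 1 / 6) := by
        apply intervalIntegral.integral_congr
        intro x _; simp only [neg_sq]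
      rw [h1, intervalIntegral.integral_comp_neg (fun x => g x * (x ^ 2 / a ^ 2 - 1 / 6))]
      norm_num
    have hsplit2 : (∫ x in (-a)..a, g x * (x ^ 2 / a ^ 2 - 1 / 6))
        = (∫ x in (-a)..(0:ℝ), g x * (x ^ 2 / a ^ 2 - 1 / 6))
          + ∫ x in (0:ℝ)..a, g x * (x ^ 2 / a ^ 2 - 1 / 6) :=
      (integral_add_adjacent_intervals hgpl hgpr).symm
    have hcomb : (∫ x in (-a)..a, g x * (x ^ 2 / a ^ 2 - 1 / 6))
        = ∫ x in (0:ℝ)..a, (g x + g (-x)) * (x ^ 2 / a ^ 2 - 1 / 6) := by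
      rw [hsplit2, hflip, ← intervalIntegral.integral_add hgn hgpr]
      apply intervalIntegral.integral_congr
      intro x _; ring
    rw [hcomb]
    -- the symmetrized function
    set G : ℝ → ℝ := fun x => g x + g (-x) with hG
    have hGint : IntervalIntegrable (fun x => G x * (x ^ 2 / a ^ 2 - 1 / 6)) volume 0 a := by
      have := hgpr.add hgn
      have h2 : (fun x => g x * (x ^ 2 / a ^ 2 - 1 / 6) + g (-x) * (x ^ 2 / a ^ 2 - 1 / 6))
          = fun x => G x * (x ^ 2 / a ^ 2 - 1 / 6) := by
        funext x; simp only [hG]; ring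
      rwa [h2] at this
    set x0 : ℝ := a / Real.sqrt 6 with hx0
    have hs6 : (0:ℝ) < Real.sqrt 6 := Real.sqrt_pos.mpr (by norm_num)
    have h16 : (1:ℝ) ≤ Real.sqrt 6 := by
      rw [show (1:ℝ) = Real.sqrt 1 from (Real.sqrt_one).symm]
      exact Real.sqrt_le_sqrt (by norm_num)
    have hx0mem : x0 ∈ Set.Icc (0:ℝ) a := ⟨by positivity, div_le_self ha.le h16⟩
    have hx0sq : x0 ^ 2 = a ^ 2 / 6 := by
      rw [hx0, div_pow, Real.sq_sqrt (by norm_num : (0:ℝ) ≤ 6)]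
    have hmono := spAux_symm_mono ha hab hconv
    have hkey : ∀ x ∈ Set.Icc (0:ℝ) a, 0 ≤ (G x - G x0) * (x ^ 2 / a ^ 2 - 1 / 6) := by
      intro x hx
      have ha2 : (0:ℝ) < a ^ 2 := by positivity
      rcases le_total x x0 with hle | hle
      · have h1 : G x ≤ G x0 := hmono hx hx0mem hle
        have h2 : x ^ 2 / a ^ 2 - 1 / 6 ≤ 0 := by
          have : x ^ 2 ≤ x0 ^ 2 := by nlinarith [hx.1]
          rw [hx0sq] at this
          rw [sub_nonpos, div_le_iff₀ ha2]; linarith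
        have := mul_nonneg (by linarith : (0:ℝ) ≤ G x0 - G x)
          (by linarith : (0:ℝ) ≤ -(x ^ 2 / a ^ 2 - 1 / 6))
        nlinarith [this]
      · have h1 : G x0 ≤ G x := hmono hx0mem hx hle
        have h2 : 0 ≤ x ^ 2 / a ^ 2 - 1 / 6 := by
          have : x0 ^ 2 ≤ x ^ 2 := by nlinarith [hx0mem.1]
          rw [hx0sq] at this
          rw [sub_nonneg, le_div_iff₀ ha2]; linarith
        exact mul_nonneg (by linarith) h2
    have hGx0 : 0 ≤ G x0 := by
      have h1 := hpos x0 ⟨by linarith [hx0mem.1], le_trans hx0mem.2 hab⟩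
      have h2 := hpos (-x0) ⟨by linarith [hx0mem.2], by linarith [hx0mem.1, ha, hab]⟩
      simp only [hG]; linarith
    have hip : (∫ x in (0:ℝ)..a, (x ^ 2 / a ^ 2 - 1 / 6)) = a / 6 := by
      rw [intervalIntegral.integral_sub ((continuous_pow 2).intervalIntegrable 0 a |>.div_const _)
        intervalIntegrable_const]
      rw [intervalIntegral.integral_div, integral_pow, intervalIntegral.integral_const]
      field_simp
      ring
    have hcp : IntervalIntegrable (fun x => G x0 * (x ^ 2 / a ^ 2 - 1 / 6)) volume 0 a :=
      ((continuous_const.mul hpc).intervalIntegrable 0 a)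
    have hdiff : IntervalIntegrable (fun x => (G x - G x0) * (x ^ 2 / a ^ 2 - 1 / 6)) volume 0 a := by
      have := hGint.sub hcp
      have h2 : (fun x => G x * (x ^ 2 / a ^ 2 - 1 / 6) - G x0 * (x ^ 2 / a ^ 2 - 1 / 6))
          = fun x => (G x - G x0) * (x ^ 2 / a ^ 2 - 1 / 6) := by
        funext x; ring
      rwa [h2] at this
    have hInn : 0 ≤ ∫ x in (0:ℝ)..a, (G x - G x0) * (x ^ 2 / a ^ 2 - 1 / 6) := by
      apply intervalIntegral.integral_nonneg ha.le
      exact hkey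
    have hsplit3 : (∫ x in (0:ℝ)..a, G x * (x ^ 2 / a ^ 2 - 1 / 6))
        = (∫ x in (0:ℝ)..a, (G x - G x0) * (x ^ 2 / a ^ 2 - 1 / 6))
          + G x0 * (a / 6) := by
      rw [← hip, ← intervalIntegral.integral_const_mul, ← intervalIntegral.integral_add hdiff hcp]
      apply intervalIntegral.integral_congr
      intro x _; ring
    have : 0 ≤ G x0 * (a / 6) := by positivity
    calc (0:ℝ) ≤ (∫ x in (0:ℝ)..a, (G x - G x0) * (x ^ 2 / a ^ 2 - 1 / 6)) + G x0 * (a / 6) := by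
          linarith
      _ = ∫ x in (0:ℝ)..a, G x * (x ^ 2 / a ^ 2 - 1 / 6) := hsplit3.symm
  linarith [hleft, hright, hsplit.ge, hsplit.le]


/-- Example 2 (third part): for `0 < a < b` and `0 < c < d`, the measure
`(x²/a² + y²/c² − 1/3) dx dy` is a Steffensen–Popoviciu measure on the rectangle
`[−a, b] × [−c, d]`: its total mass is positive and it integrates every
continuous convex `h : [−a, b] × [−c, d] → [0, ∞)` to a nonnegative number. -/
theorem sum_quadratic_weight_SP_measure_rectangle
    (a b c d : ℝ) (ha : 0 < a) (hab : a < b) (hc : 0 < c) (hcd : c < d) :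
    (0 < ∫ x in (-a)..b, ∫ y in (-c)..d,
        (x ^ 2 / a ^ 2 + y ^ 2 / c ^ 2 - 1 / 3)) ∧
      ∀ h : ℝ × ℝ → ℝ,
        ContinuousOn h (Set.Icc (-a) b ×ˢ Set.Icc (-c) d) →
        ConvexOn ℝ (Set.Icc (-a) b ×ˢ Set.Icc (-c) d) h →
        (∀ z ∈ Set.Icc (-a) b ×ˢ Set.Icc (-c) d, 0 ≤ h z) →
        0 ≤ ∫ x in (-a)..b, ∫ y in (-c)..d,
            h (x, y) * (x ^ 2 / a ^ 2 + y ^ 2 / c ^ 2 - 1 / 3) := by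
  constructor
  · -- total mass is positive
    have hc2 : (c:ℝ) ≠ 0 := ne_of_gt hc
    have ha2 : (a:ℝ) ≠ 0 := ne_of_gt ha
    have inner : ∀ x : ℝ, (∫ y in (-c)..d, (x ^ 2 / a ^ 2 + y ^ 2 / c ^ 2 - 1 / 3))
        = (d + c) * (x ^ 2 / a ^ 2 - 1 / 3) + (d ^ 3 + c ^ 3) / (3 * c ^ 2) := by
      intro x
      have h1 : (fun y : ℝ => x ^ 2 / a ^ 2 + y ^ 2 / c ^ 2 - 1 / 3)
          = fun y => (x ^ 2 / a ^ 2 - 1 / 3) + y ^ 2 / c ^ 2 := by funext y; ring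
      rw [h1, intervalIntegral.integral_add intervalIntegrable_const
        (((continuous_pow 2).intervalIntegrable _ _).div_const _),
        intervalIntegral.integral_const, intervalIntegral.integral_div, integral_pow]
      push_cast
      field_simp
      ring_nf
      field_simp
      ring
    simp only [inner]
    have h2 : (fun x : ℝ => (d + c) * (x ^ 2 / a ^ 2 - 1 / 3) + (d ^ 3 + c ^ 3) / (3 * c ^ 2))
        = fun x => ((d + c) / a ^ 2) * x ^ 2 + ((d ^ 3 + c ^ 3) / (3 * c ^ 2) - (d + c) / 3) := by
      funext x; ring
    rw [h2, intervalIntegral.integral_add (show IntervalIntegrable (fun x : ℝ => (d + c) / a ^ 2 * x ^ 2) volume (-a) b from ((continuous_const.mul (continuous_pow 2))).intervalIntegrable _ _)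
      intervalIntegrable_const, intervalIntegral.integral_const_mul, integral_pow,
      intervalIntegral.integral_const]
    push_cast
    have key : ((d + c) / a ^ 2) * ((b ^ 3 - (-a) ^ 3) / (2 + 1)) + (b - -a) • ((d ^ 3 + c ^ 3) / (3 * c ^ 2) - (d + c) / 3)
        = ((d + c) * (b ^ 3 + a ^ 3) * c ^ 2 + (b + a) * (d ^ 3 + c ^ 3) * a ^ 2
            - (b + a) * (d + c) * a ^ 2 * c ^ 2) / (3 * a ^ 2 * c ^ 2) := by
      rw [smul_eq_mul]
      field_simp
      ring
    rw [key]
    apply div_pos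
    · have hd : 0 < d := lt_trans hc hcd
      have hb : 0 < b := lt_trans ha hab
      have h1 : 0 < ((d + c) * c ^ 2) * (b * ((b - a) * (b + a))) :=
        mul_pos (mul_pos (by linarith) (by positivity))
          (mul_pos hb (mul_pos (by linarith) (by linarith)))
      have h2 : 0 < (b + a) * ((d ^ 3 + c ^ 3) * a ^ 2) :=
        mul_pos (by linarith) (mul_pos (add_pos (pow_pos hd 3) (pow_pos hc 3)) (by positivity))
      nlinarith [h1, h2]
    · positivity
  · -- nonnegativity on continuous convex nonnegative functions
    intro h hcont hconv hpos
    have hnab : (-a : ℝ) ≤ b := by linarith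
    have hncd : (-c : ℝ) ≤ d := by linarith
    -- clamping maps
    set cx : ℝ → ℝ := fun t => max (-a) (min t b) with hcxdef
    set cy : ℝ → ℝ := fun t => max (-c) (min t d) with hcydef
    have hcxc : Continuous cx := continuous_const.max (continuous_id.min continuous_const)
    have hcyc : Continuous cy := continuous_const.max (continuous_id.min continuous_const)
    have hcxmem : ∀ t, cx t ∈ Set.Icc (-a) b :=
      fun t => ⟨le_max_left _ _, max_le hnab (min_le_right _ _)⟩
    have hcymem : ∀ t, cy t ∈ Set.Icc (-c) d :=
      fun t => ⟨le_max_left _ _, max_le hncd (min_le_right _ _)⟩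
    have hcxeq : ∀ t ∈ Set.Icc (-a) b, cx t = t := by
      intro t ht; rw [hcxdef]; simp only; rw [min_eq_left ht.2, max_eq_right ht.1]
    have hcyeq : ∀ t ∈ Set.Icc (-c) d, cy t = t := by
      intro t ht; rw [hcydef]; simp only; rw [min_eq_left ht.2, max_eq_right ht.1]
    -- the clamped extension of h
    set h' : ℝ → ℝ → ℝ := fun x y => h (cx x, cy y) with hh'def
    have hh'c : Continuous (Function.uncurry h') := by
      have hmap : Continuous fun p : ℝ × ℝ => (cx p.1, cy p.2) :=
        (hcxc.comp continuous_fst).prodMk (hcyc.comp continuous_snd)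
      exact hcont.comp_continuous hmap fun p => ⟨hcxmem _, hcymem _⟩
    have hhx : ∀ x : ℝ, Continuous fun y => h' x y :=
      fun x => hh'c.comp (continuous_const.prodMk continuous_id)
    have h'pos : ∀ x y, 0 ≤ h' x y := fun x y => hpos _ ⟨hcxmem x, hcymem y⟩
    have h'eq : ∀ x ∈ Set.Icc (-a) b, ∀ y ∈ Set.Icc (-c) d, h' x y = h (x, y) := by
      intro x hx y hy
      rw [hh'def]; simp only; rw [hcxeq x hx, hcyeq y hy]
    -- convexity in the second variable, for fixed x in the slab
    have hconvy : ∀ x ∈ Set.Icc (-a) b, ConvexOn ℝ (Set.Icc (-c) d) fun y => h' x y := by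
      intro x hx
      refine ⟨convex_Icc _ _, ?_⟩
      intro y1 hy1 y2 hy2 t s ht hs hts
      have hmem : t • y1 + s • y2 ∈ Set.Icc (-c) d := (convex_Icc _ _) hy1 hy2 ht hs hts
      have key := hconv.2 (Set.mk_mem_prod hx hy1) (Set.mk_mem_prod hx hy2) ht hs hts
      simp only [Prod.smul_mk, Prod.mk_add_mk, smul_eq_mul] at key hmem ⊢
      have hx' : t * x + s * x = x := by rw [← add_mul, hts, one_mul]
      rw [hx'] at key
      rw [h'eq x hx _ hmem, h'eq x hx y1 hy1, h'eq x hx y2 hy2]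
      exact key
    -- convexity of H := ∫ y, h' x y in x
    have Hconv : ConvexOn ℝ (Set.Icc (-a) b) fun x => ∫ y in (-c)..d, h' x y := by
      refine ⟨convex_Icc _ _, ?_⟩
      intro x hx u hu t s ht hs hts
      have hmem : t • x + s • u ∈ Set.Icc (-a) b := (convex_Icc _ _) hx hu ht hs hts
      simp only [smul_eq_mul] at hmem ⊢
      have hxy : ∀ y ∈ Set.Icc (-c) d, h' (t * x + s * u) y ≤ t * h' x y + s * h' u y := by
        intro y hy
        have key := hconv.2 (Set.mk_mem_prod hx (hcymem y)) (Set.mk_mem_prod hu (hcymem y))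
          ht hs hts
        simp only [Prod.smul_mk, Prod.mk_add_mk, smul_eq_mul] at key
        have hy' : t * cy y + s * cy y = cy y := by rw [← add_mul, hts, one_mul]
        rw [hy'] at key
        have e1 : h' (t * x + s * u) y = h (t * x + s * u, cy y) := by
          rw [hh'def]; simp only; rw [hcxeq _ hmem]
        have e2 : h' x y = h (x, cy y) := by rw [hh'def]; simp only; rw [hcxeq _ hx]
        have e3 : h' u y = h (u, cy y) := by rw [hh'def]; simp only; rw [hcxeq _ hu]
        rw [e1, e2, e3]
        exact key
      have i0 : IntervalIntegrable (fun y => h' (t * x + s * u) y) volume (-c) d :=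
        (hhx _).intervalIntegrable _ _
      have i1 : IntervalIntegrable (fun y => t * h' x y + s * h' u y) volume (-c) d :=
        ((continuous_const.mul (hhx x)).add (continuous_const.mul (hhx u))).intervalIntegrable _ _
      calc (∫ y in (-c)..d, h' (t * x + s * u) y)
          ≤ ∫ y in (-c)..d, (t * h' x y + s * h' u y) :=
            intervalIntegral.integral_mono_on hncd i0 i1 hxy
        _ = t * (∫ y in (-c)..d, h' x y) + s * ∫ y in (-c)..d, h' u y := by
            rw [intervalIntegral.integral_add (show IntervalIntegrable (fun y => t * h' x y) volume (-c) d from ((continuous_const.mul (hhx x))).intervalIntegrable _ _)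
              (show IntervalIntegrable (fun y => s * h' u y) volume (-c) d from ((continuous_const.mul (hhx u))).intervalIntegrable _ _),
              intervalIntegral.integral_const_mul, intervalIntegral.integral_const_mul]
    -- continuity of the two slice integrals
    have HcontH : Continuous fun x => ∫ y in (-c)..d, h' x y :=
      continuous_parametric_intervalIntegral_of_continuous' hh'c _ _
    have HcontK : Continuous fun x => ∫ y in (-c)..d, h' x y * (y ^ 2 / c ^ 2 - 1 / 6) := by
      apply continuous_parametric_intervalIntegral_of_continuous'
        (f := fun x y => h' x y * (y ^ 2 / c ^ 2 - 1 / 6))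
      exact hh'c.mul ((continuous_snd.pow 2).div_const _ |>.sub continuous_const)
    have Hpos : ∀ x ∈ Set.Icc (-a) b, 0 ≤ ∫ y in (-c)..d, h' x y :=
      fun x _ => intervalIntegral.integral_nonneg hncd fun y _ => h'pos x y
    have Kpos : ∀ x ∈ Set.Icc (-a) b, 0 ≤ ∫ y in (-c)..d, h' x y * (y ^ 2 / c ^ 2 - 1 / 6) :=
      fun x hx => spAux_oneDim c d hc hcd.le (fun y => h' x y)
        ((hhx x).intervalIntegrable _ _) (hconvy x hx) (fun y _ => h'pos x y)
    -- rewrite the double integral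
    have main_eq : (∫ x in (-a)..b, ∫ y in (-c)..d,
          h (x, y) * (x ^ 2 / a ^ 2 + y ^ 2 / c ^ 2 - 1 / 3))
        = ∫ x in (-a)..b, ((∫ y in (-c)..d, h' x y) * (x ^ 2 / a ^ 2 - 1 / 6)
            + ∫ y in (-c)..d, h' x y * (y ^ 2 / c ^ 2 - 1 / 6)) := by
      apply intervalIntegral.integral_congr
      intro x hx
      rw [Set.uIcc_of_le hnab] at hx
      have e1 : (∫ y in (-c)..d, h (x, y) * (x ^ 2 / a ^ 2 + y ^ 2 / c ^ 2 - 1 / 3))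
          = ∫ y in (-c)..d, ((x ^ 2 / a ^ 2 - 1 / 6) * h' x y
              + h' x y * (y ^ 2 / c ^ 2 - 1 / 6)) := by
        apply intervalIntegral.integral_congr
        intro y hy
        rw [Set.uIcc_of_le hncd] at hy
        simp only
        rw [← h'eq x hx y hy]
        ring
      simp only
      rw [e1, intervalIntegral.integral_add
        (show IntervalIntegrable (fun y => (x ^ 2 / a ^ 2 - 1 / 6) * h' x y) volume (-c) d from (continuous_const.mul (hhx x)).intervalIntegrable _ _)
        (show IntervalIntegrable (fun y => h' x y * (y ^ 2 / c ^ 2 - 1 / 6)) volume (-c) d from ((hhx x).mul ((continuous_pow 2).div_const _ |>.sub continuous_const)).intervalIntegrable _ _),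
        intervalIntegral.integral_const_mul]
      ring
    rw [main_eq, intervalIntegral.integral_add
      (show IntervalIntegrable (fun x => (∫ y in (-c)..d, h' x y) * (x ^ 2 / a ^ 2 - 1 / 6)) volume (-a) b from (HcontH.mul ((continuous_pow 2).div_const _ |>.sub continuous_const)).intervalIntegrable _ _)
      (HcontK.intervalIntegrable _ _)]
    have part1 : 0 ≤ ∫ x in (-a)..b, (∫ y in (-c)..d, h' x y) * (x ^ 2 / a ^ 2 - 1 / 6) :=
      spAux_oneDim a b ha hab.le (fun x => ∫ y in (-c)..d, h' x y)
        (HcontH.intervalIntegrable _ _) Hconv Hpos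
    have part2 : 0 ≤ ∫ x in (-a)..b, ∫ y in (-c)..d, h' x y * (y ^ 2 / c ^ 2 - 1 / 6) :=
      intervalIntegral.integral_nonneg hnab Kpos
    linarith
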